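/- If dim satisfies countable stability, νₙ → ν setwise, and sup_n dim^U(νₙ) ≤ dim^U(ν), then lim_{n→∞} dim^U(νₙ) = dim^U(ν). -/

import Mathlib

open MeasureTheory Filter Set
open scoped ENNReal NNReal Topology

noncomputable def dimU {X : Type*} [MeasurableSpace X] (dim : Set X → ℝ≥0∞)
    (μ : Measure X) : ℝ≥0∞ :=
  sInf {d | ∃ A : Set X, MeasurableSet A ∧ μ Aᶜ = 0 ∧ dim A = d}

def SetwiseTendsto {X : Type*} [MeasurableSpace X] (ν : ℕ → Measure X) (μ : Measure X) : Prop :=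
  ∀ A : Set X, MeasurableSet A → Tendsto (fun n => ν n A) atTop (nhds (μ A))

def CountablyStable {X : Type*} [MeasurableSpace X] (dim : Set X → ℝ≥0∞) : Prop :=
  ∀ A : ℕ → Set X, (∀ i, MeasurableSet (A i)) → dim (⋃ i, A i) = ⨆ i, dim (A i)

/-- If `dim` is countably stable, `νₙ → ν` setwise, and `sup_n dim^U(νₙ) ≤ dim^U(ν)`,
then `dim^U(νₙ) → dim^U(ν)`. -/
theorem dimU_tendsto_of_sup_le {X : Type*} [MetricSpace X] [MeasurableSpace X]
    [BorelSpace X] (dim : Set X → ℝ≥0∞) (hdim : CountablyStable dim)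
    (ν : ℕ → Measure X) (μ : Measure X) (hconv : SetwiseTendsto ν μ)
    (hsup : (⨆ n, dimU dim (ν n)) ≤ dimU dim μ) :
    Tendsto (fun n => dimU dim (ν n)) atTop (nhds (dimU dim μ)) := by

  set f : ℕ → ℝ≥0∞ := fun n => dimU dim (ν n) with hf
  have hle : ∀ n, f n ≤ dimU dim μ := fun n => le_trans (le_iSup _ n) hsup
  -- key: dimU μ ≤ liminf f
  have hlim : dimU dim μ ≤ liminf f atTop := by
    refine le_of_forall_gt_imp_ge_of_dense fun c hc => ?_
    have hfreq : ∃ᶠ n in atTop, f n < c := frequently_lt_of_liminf_lt (by isBoundedDefault) hc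
    obtain ⟨φ, hφ, hφc⟩ := Filter.extraction_of_frequently_atTop hfreq
    have hA : ∀ k, ∃ A : Set X, MeasurableSet A ∧ ν (φ k) Aᶜ = 0 ∧ dim A < c := by
      intro k
      have : sInf {d | ∃ A : Set X, MeasurableSet A ∧ ν (φ k) Aᶜ = 0 ∧ dim A = d} < c := hφc k
      rw [sInf_lt_iff] at this
      obtain ⟨d, ⟨A, hAm, hA0, hAd⟩, hdc⟩ := this
      exact ⟨A, hAm, hA0, hAd ▸ hdc⟩
    choose A hAm hA0 hAc using hA
    set B : Set X := ⋃ k, A k with hB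
    have hBm : MeasurableSet B := MeasurableSet.iUnion hAm
    have hdimB : dim B ≤ c := by
      rw [hB, hdim A hAm]
      exact iSup_le fun k => (hAc k).le
    have hμB : μ Bᶜ = 0 := by
      have h1 : Tendsto (fun n => ν n Bᶜ) atTop (nhds (μ Bᶜ)) := hconv Bᶜ hBm.compl
      have h2 : Tendsto (fun k => ν (φ k) Bᶜ) atTop (nhds (μ Bᶜ)) :=
        h1.comp hφ.tendsto_atTop
      have h3 : ∀ k, ν (φ k) Bᶜ = 0 := by
        intro k
        have : Bᶜ ⊆ (A k)ᶜ := compl_subset_compl.mpr (subset_iUnion A k)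
        exact le_antisymm ((measure_mono this).trans (hA0 k).le) zero_le
      have h4 : Tendsto (fun k => ν (φ k) Bᶜ) atTop (nhds 0) := by
        simp only [h3]; exact tendsto_const_nhds
      exact tendsto_nhds_unique h2 h4
    calc dimU dim μ ≤ dim B := sInf_le ⟨B, hBm, hμB, rfl⟩
      _ ≤ c := hdimB
  have hlimsup : limsup f atTop ≤ dimU dim μ :=
    limsup_le_of_le (by isBoundedDefault) (Eventually.of_forall hle)
  exact tendsto_of_le_liminf_of_limsup_le hlim hlimsup
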